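/- For every g > 0, Z(g) = ∫_{-∞}^{∞} e^{-x²/2 - g x⁴} dx = √(1/(8g)) · e^{1/(32g)} · K_{1/4}(1/(32g)), where K_{1/4} is the modified Bessel function of the second kind of order 1/4. -/

import Mathlib

open MeasureTheory Real Set

/-- The modified Bessel function of the second kind, via its integral representation
`K_ν(x) = ∫_0^∞ e^{-x cosh t} cosh(ν t) dt`. -/
noncomputable def besselK (ν x : ℝ) : ℝ :=
  ∫ t in Set.Ioi (0 : ℝ), Real.exp (-x * Real.cosh t) * Real.cosh (ν * t)

lemma psi_image (g : ℝ) (hg : 0 < g) :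
    (fun t : ℝ => Real.sinh (t / 4) / Real.sqrt (2 * g)) '' Set.Ioi 0 = Set.Ioi 0 := by
  have hc : 0 < Real.sqrt (2 * g) := Real.sqrt_pos.mpr (by linarith)
  ext y
  constructor
  · rintro ⟨t, ht, rfl⟩
    have ht4 : (0:ℝ) < t / 4 := by linarith [Set.mem_Ioi.mp ht]
    exact Set.mem_Ioi.mpr (div_pos (Real.sinh_pos_iff.mpr ht4) hc)
  · intro hy
    refine ⟨4 * Real.arsinh (y * Real.sqrt (2 * g)), ?_, ?_⟩
    · have h := Real.arsinh_pos_iff.mpr (mul_pos hy hc)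
      exact Set.mem_Ioi.mpr (by linarith)
    · field_simp [Real.sinh_arsinh]
      exact Real.sinh_arsinh _

/-- Closed form of the anharmonic partition function:
`Z(g) = √(1/(8g)) e^{1/(32g)} K_{1/4}(1/(32g))`. -/
theorem partition_function_closed_form (g : ℝ) (hg : 0 < g) :
    (∫ x : ℝ, Real.exp (-(x ^ 2 / 2 + g * x ^ 4))) =
      Real.sqrt (1 / (8 * g)) * Real.exp (1 / (32 * g)) * besselK (1 / 4) (1 / (32 * g)) := by
  set c := Real.sqrt (2 * g) with hc_def
  have hc : 0 < c := Real.sqrt_pos.mpr (by linarith)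
  have hc2 : c ^ 2 = 2 * g := Real.sq_sqrt (by linarith)
  set a := 1 / (32 * g) with ha_def
  set ψ : ℝ → ℝ := fun t => Real.sinh (t / 4) / c with hψ
  -- step 1: doubling
  have h1 : (∫ x : ℝ, Real.exp (-(x ^ 2 / 2 + g * x ^ 4)))
      = 2 * ∫ x in Set.Ioi (0:ℝ), Real.exp (-(x ^ 2 / 2 + g * x ^ 4)) := by
    rw [← integral_comp_abs (f := fun x => Real.exp (-(x ^ 2 / 2 + g * x ^ 4)))]
    congr 1 with x
    rw [sq_abs, show |x| ^ 4 = x ^ 4 by rw [← abs_pow]; exact abs_of_nonneg (by positivity)]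
  -- step 2: change of variables
  have hderiv : ∀ t ∈ Set.Ioi (0:ℝ),
      HasDerivWithinAt ψ (Real.cosh (t / 4) / (4 * c)) (Set.Ioi 0) t := by
    intro t _
    have h := (((hasDerivAt_id t).div_const 4).sinh).div_const c
    convert h.hasDerivWithinAt using 1
    · rfl
    · rfl
    · rfl
    · rw [id]; ring
  have hinj : Set.InjOn ψ (Set.Ioi 0) := by
    have : StrictMono ψ := fun s t hst =>
      div_lt_div_of_pos_right (Real.sinh_lt_sinh.mpr (by linarith)) hc
    exact this.injective.injOn
  have himg : ψ '' Set.Ioi 0 = Set.Ioi 0 := psi_image g hg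
  have h2 : (∫ x in Set.Ioi (0:ℝ), Real.exp (-(x ^ 2 / 2 + g * x ^ 4)))
      = ∫ t in Set.Ioi (0:ℝ),
          |Real.cosh (t / 4) / (4 * c)| • Real.exp (-(ψ t ^ 2 / 2 + g * ψ t ^ 4)) := by
    have h := MeasureTheory.integral_image_eq_integral_abs_deriv_smul measurableSet_Ioi hderiv
      hinj (fun x => Real.exp (-(x ^ 2 / 2 + g * x ^ 4)))
    rw [himg] at h
    exact h
  -- step 3: simplify integrand
  have h3 : ∀ t : ℝ, |Real.cosh (t / 4) / (4 * c)| • Real.exp (-(ψ t ^ 2 / 2 + g * ψ t ^ 4))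
      = (Real.exp a / (4 * c)) * (Real.exp (-a * Real.cosh t) * Real.cosh (1 / 4 * t)) := by
    intro t
    have hcosh : (0:ℝ) < Real.cosh (t / 4) := Real.cosh_pos _
    have habs : |Real.cosh (t / 4) / (4 * c)| = Real.cosh (t / 4) / (4 * c) :=
      abs_of_pos (div_pos hcosh (by linarith))
    have key : ψ t ^ 2 / 2 + g * ψ t ^ 4 = a * Real.cosh t - a := by
      have e1 : ψ t ^ 2 = Real.sinh (t / 4) ^ 2 / (2 * g) := by
        show (Real.sinh (t / 4) / c) ^ 2 = _
        rw [div_pow, hc2]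
      have e2 : ψ t ^ 4 = (Real.sinh (t / 4) ^ 2) ^ 2 / (2 * g) ^ 2 := by
        show (Real.sinh (t / 4) / c) ^ 4 = _
        rw [div_pow, ← hc2]; ring
      have s2 : Real.sinh (t / 2) = 2 * Real.sinh (t / 4) * Real.cosh (t / 4) := by
        rw [show t / 2 = 2 * (t / 4) by ring, Real.sinh_two_mul]
      have c2 : Real.cosh (t / 4) ^ 2 = 1 + Real.sinh (t / 4) ^ 2 := by
        rw [Real.cosh_sq']
      have s4 : Real.cosh t = Real.cosh (t / 2) ^ 2 + Real.sinh (t / 2) ^ 2 := by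
        have h := Real.cosh_two_mul (t / 2)
        rw [show 2 * (t / 2) = t by ring] at h
        exact h
      have c2' : Real.cosh (t / 2) ^ 2 = 1 + Real.sinh (t / 2) ^ 2 := by
        rw [Real.cosh_sq']
      have hct : Real.cosh t = 8 * Real.sinh (t / 4) ^ 2 * (1 + Real.sinh (t / 4) ^ 2) + 1 := by
        linear_combination s4 + c2' +
          2 * (Real.sinh (t / 2) + 2 * Real.sinh (t / 4) * Real.cosh (t / 4)) * s2 +
          8 * Real.sinh (t / 4) ^ 2 * c2
      rw [e1, e2, hct, ha_def]
      field_simp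
      ring
    rw [habs, key, smul_eq_mul,
      show -(a * Real.cosh t - a) = (-a * Real.cosh t) + a by ring, Real.exp_add,
      show (1:ℝ) / 4 * t = t / 4 by ring]
    ring
  -- combine
  rw [h1, h2]
  simp_rw [h3]
  rw [MeasureTheory.integral_const_mul]
  have h8 : (1:ℝ) / (8 * g) = (1 / (2 * c)) ^ 2 := by
    rw [div_pow, mul_pow, hc2]; ring
  rw [h8, Real.sqrt_sq (by positivity)]
  unfold besselK
  ring
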